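/- There is no sequence of polynomials P_κ(x) of degree ≤ 2 on ℝ^N with ΔP_κ = 0 such that |P_κ(x) − |x|²| ≤ c·δ_κ^{2+σ} for all x in the sets I_{1,κ} ∪ … ∪ I_{N,κ}, where δ_κ = 2^{−κ−2}, σ ∈ (0,1), t_κ = ((2^{−κ}+2^{−κ−1})/2, 0, …, 0), I_{1,κ} = [2^{−κ−1}, 2^{−κ}] × {0}^{N−1}, and for j > 1, I_{j,κ} = {t_κ + s·e_j : s ∈ [−δ_κ, δ_κ]} (segments through t_κ in each coordinate direction). More precisely: if P is a harmonic polynomial of degree ≤ 2 and |P(x) − |x|²| ≤ c δ^{2+σ} on the union of N mutually orthogonal coordinate segments of length 2δ through a point t (one in each coordinate direction), then c δ^{2+σ} ≥ c' δ² for a dimensional constant c' > 0, contradicting σ > 0 for small δ. -/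
import Mathlib


open Metric Finset

lemma stmt13_expand (N : ℕ) (a₀ : ℝ) (a : Fin N → ℝ) (b : Fin N → Fin N → ℝ)
    (P : EuclideanSpace ℝ (Fin N) → ℝ)
    (hP : ∀ x, P x = a₀ + (∑ j, a j * x j) + ∑ j, ∑ j', b j j' * x j * x j')
    (t : EuclideanSpace ℝ (Fin N)) (j : Fin N) (s : ℝ) :
    P (t + EuclideanSpace.single j s)
      = P t + s * (a j + (∑ k, b k j * t k) + (∑ k', b j k' * t k')) + s^2 * b j j := by
  have h1 : ∀ k, (t + EuclideanSpace.single j s) k = t k + if k = j then s else 0 := by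
    intro k; simp [EuclideanSpace.single_apply]
  rw [hP, hP t]
  simp only [h1, mul_add, add_mul, mul_ite, ite_mul, mul_zero, zero_mul, add_zero, zero_add,
    Finset.sum_add_distrib, Finset.sum_ite_irrel, Finset.sum_const_zero, Finset.sum_ite_eq',
    Finset.mem_univ, if_true]
  have e1 : (∑ x : Fin N, b j x * s * t x) = s * ∑ x : Fin N, b j x * t x := by
    rw [Finset.mul_sum]; exact Finset.sum_congr rfl fun x _ => by ring
  have e2 : (∑ x : Fin N, b x j * t x * s) = s * ∑ x : Fin N, b x j * t x := by
    rw [Finset.mul_sum]; exact Finset.sum_congr rfl fun x _ => by ring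
  rw [e1, e2]; ring

lemma stmt13_norm (N : ℕ) (t : EuclideanSpace ℝ (Fin N)) (j : Fin N) (s : ℝ) :
    ‖t + EuclideanSpace.single j s‖^2 = ‖t‖^2 + 2 * s * t j + s^2 := by
  rw [norm_add_sq_real]
  simp [real_inner_comm, EuclideanSpace.inner_single_right, EuclideanSpace.norm_single]
  ring

/-- the counter-example, precise form: there is a dimensional
constant c' > 0 such that whenever P is a harmonic polynomial of degree ≤ 2
(written with coefficients, harmonicity being the trace condition ∑_j b_{jj}=0)
and `|P(x) − |x|²| ≤ c δ^{2+σ}` on the union of the N coordinate segments of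
half-length δ through a point t, then `c δ^{2+σ} ≥ c' δ²`.  (Since σ > 0, this
rules out such approximation for all small δ.) -/
theorem stmt13 (N : ℕ) (hN : 2 ≤ N) :
    ∃ c' > (0:ℝ), ∀ (a₀ : ℝ) (a : Fin N → ℝ) (b : Fin N → Fin N → ℝ),
      (∑ j, b j j) = 0 →
      ∀ (P : EuclideanSpace ℝ (Fin N) → ℝ),
      (∀ x, P x = a₀ + (∑ j, a j * x j) + ∑ j, ∑ j', b j j' * x j * x j') →
      ∀ (c σ δ : ℝ), 0 < c → 0 < σ → σ < 1 → 0 < δ →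
      ∀ t : EuclideanSpace ℝ (Fin N),
      (∀ j : Fin N, ∀ s ∈ Set.Icc (-δ) δ,
        |P (t + EuclideanSpace.single j s) - ‖t + EuclideanSpace.single j s‖ ^ 2|
          ≤ c * δ ^ ((2:ℝ) + σ)) →
      c' * δ ^ 2 ≤ c * δ ^ ((2:ℝ) + σ) := by
  refine ⟨1/2, by norm_num, ?_⟩
  intro a₀ a b htrace P hP c σ δ hc hσ hσ1 hδ t hbound
  set E : ℝ := c * δ ^ ((2:ℝ) + σ) with hE
  -- second difference estimate for each coordinate direction
  have key : ∀ j : Fin N, |b j j - 1| * δ^2 ≤ 2 * E := by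
    intro j
    have hpl := hbound j δ ⟨by linarith, le_refl δ⟩
    have hmi := hbound j (-δ) ⟨le_refl _, by linarith⟩
    have h₀ := hbound j 0 ⟨by linarith, by linarith⟩
    set f : ℝ → ℝ :=
      fun s => P (t + EuclideanSpace.single j s) - ‖t + EuclideanSpace.single j s‖^2 with hf
    have hfs : ∀ s : ℝ, f s = (P t - ‖t‖^2)
        + s * (a j + (∑ k, b k j * t k) + (∑ k', b j k' * t k') - 2 * t j)
        + s^2 * (b j j - 1) := by
      intro s
      simp only [hf, stmt13_expand N a₀ a b P hP t j s, stmt13_norm N t j s]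
      ring
    have hdiff : f δ + f (-δ) - 2 * f 0 = 2 * δ^2 * (b j j - 1) := by
      rw [hfs, hfs, hfs]; ring
    have : |f δ + f (-δ) - 2 * f 0| ≤ 4 * E := by
      calc |f δ + f (-δ) - 2 * f 0| ≤ |f δ| + |f (-δ)| + 2 * |f 0| := by
            have := abs_add_le (f δ + f (-δ)) (-(2 * f 0))
            have := abs_add_le (f δ) (f (-δ))
            simp only [abs_neg, abs_mul, abs_two] at *
            calc |f δ + f (-δ) - 2 * f 0| ≤ |f δ + f (-δ)| + |2 * f 0| := abs_sub _ _
              _ ≤ |f δ| + |f (-δ)| + 2 * |f 0| := by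
                  rw [abs_mul, abs_two]; gcongr ?_ + ?_ <;> first | exact abs_add_le _ _ | rfl
        _ ≤ E + E + 2 * E := by gcongr
        _ = 4 * E := by ring
    rw [hdiff] at this
    have h2 : |2 * δ^2 * (b j j - 1)| = 2 * δ^2 * |b j j - 1| := by
      rw [abs_mul, abs_mul]
      rw [abs_of_nonneg (by norm_num : (0:ℝ) ≤ 2), abs_of_nonneg (sq_nonneg δ)]
    rw [h2] at this
    nlinarith [abs_nonneg (b j j - 1)]
  -- sum over j
  have hsum : (N : ℝ) * δ^2 ≤ (N : ℝ) * (2 * E) := by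
    have h1 : (N : ℝ) = |∑ j : Fin N, (1 - b j j)| := by
      rw [Finset.sum_sub_distrib, htrace, sub_zero, Finset.sum_const, Finset.card_univ,
        Fintype.card_fin, nsmul_eq_mul, mul_one, abs_of_nonneg (Nat.cast_nonneg N)]
    have h2 : |∑ j : Fin N, (1 - b j j)| ≤ ∑ j : Fin N, |b j j - 1| := by
      refine (Finset.abs_sum_le_sum_abs _ _).trans ?_
      exact le_of_eq (Finset.sum_congr rfl fun j _ => abs_sub_comm _ _)
    have h3 : (∑ j : Fin N, |b j j - 1|) * δ^2 ≤ (N : ℝ) * (2 * E) := by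
      calc (∑ j : Fin N, |b j j - 1|) * δ^2 = ∑ j : Fin N, |b j j - 1| * δ^2 := by
            rw [Finset.sum_mul]
        _ ≤ ∑ _j : Fin N, 2 * E := Finset.sum_le_sum fun j _ => key j
        _ = (N : ℝ) * (2 * E) := by
            rw [Finset.sum_const, Finset.card_univ, Fintype.card_fin, nsmul_eq_mul]
    calc (N : ℝ) * δ^2 ≤ (∑ j : Fin N, |b j j - 1|) * δ^2 := by
          rw [h1]; exact mul_le_mul_of_nonneg_right h2 (sq_nonneg δ)
      _ ≤ (N : ℝ) * (2 * E) := h3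
  have hNpos : (0:ℝ) < (N : ℝ) := by
    have : (0:ℕ) < N := by omega
    exact_mod_cast this
  have : δ^2 ≤ 2 * E := le_of_mul_le_mul_left (by linarith [hsum]) hNpos
  linarith
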